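/- Let n ≥ 2, β > 0 and r₀ > 0, and define D(γ) = √( e^{2β} + 2(n−1) e^{β(1+γ)} γ + (n−1) e^{2βγ} (1 + (n−2)γ) ). Let (γ, r) : [0,∞) → ℝ × (0,∞) be a C¹ solution of the Peri-LN symmetric system ṙ(t) = ((n−1) e^{βγ(t)} γ(t) + e^{β}) / D(γ(t)) and γ̇(t) = 2 e^{βγ(t)} (1 − γ(t)) ((n−1)γ(t) + 1) / ( r(t) D(γ(t)) ), with γ(0) = 0 and r(0) = r₀. Then 0 ≤ γ(t) < 1 for all t, γ(t) → 1 as t → ∞, and r(t)/t → 1 as t → ∞. -/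

import Mathlib

open Filter Real Topology Set

/-- The denominator `D(γ)` of the nGPT/Peri-LN symmetric cosine-similarity ODE. -/
noncomputable def symDenom (n : ℕ) (β γ : ℝ) : ℝ :=
  Real.sqrt (Real.exp (2 * β) + 2 * (n - 1) * Real.exp (β * (1 + γ)) * γ +
    (n - 1) * Real.exp (2 * β * γ) * (1 + (n - 2) * γ))

lemma expand_aux (n : ℕ) (β g : ℝ) :
    Real.exp (2 * β) + 2 * ((n : ℝ) - 1) * Real.exp (β * (1 + g)) * g +
      ((n : ℝ) - 1) * Real.exp (2 * β * g) * (1 + ((n : ℝ) - 2) * g)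
    = (Real.exp β) ^ 2 + 2 * ((n : ℝ) - 1) * (Real.exp β * Real.exp (β * g)) * g +
      ((n : ℝ) - 1) * (Real.exp (β * g)) ^ 2 * (1 + ((n : ℝ) - 2) * g) := by
  rw [show 2 * β * g = β * g + β * g by ring, show β * (1 + g) = β + β * g by ring,
    show 2 * β = β + β by ring, Real.exp_add, Real.exp_add, Real.exp_add]
  ring

lemma exp_le_symDenom (n : ℕ) (β g : ℝ) (hn : 2 ≤ n) (hg0 : 0 ≤ g) :
    Real.exp β ≤ symDenom n β g := by
  have hnR : (2 : ℝ) ≤ (n : ℝ) := by exact_mod_cast hn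
  have ha := Real.exp_pos β
  have hb := Real.exp_pos (β * g)
  unfold symDenom
  rw [expand_aux]
  have h1 : 0 ≤ 2 * ((n:ℝ) - 1) * (Real.exp β * Real.exp (β * g)) * g :=
    mul_nonneg (mul_nonneg (by linarith : (0:ℝ) ≤ 2 * ((n:ℝ) - 1)) (mul_pos ha hb).le) hg0
  have hg2 : 0 ≤ ((n:ℝ) - 2) * g := mul_nonneg (by linarith) hg0
  have h2 : 0 ≤ ((n:ℝ) - 1) * (Real.exp (β * g)) ^ 2 * (1 + ((n:ℝ) - 2) * g) :=
    mul_nonneg (mul_nonneg (by linarith) (sq_nonneg _)) (by linarith)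
  calc Real.exp β = Real.sqrt ((Real.exp β) ^ 2) := (Real.sqrt_sq ha.le).symm
    _ ≤ _ := Real.sqrt_le_sqrt (by linarith)

lemma symDenom_pos (n : ℕ) (β g : ℝ) (hn : 2 ≤ n) (hg0 : 0 ≤ g) :
    0 < symDenom n β g := lt_of_lt_of_le (Real.exp_pos β) (exp_le_symDenom n β g hn hg0)

lemma symDenom_le (n : ℕ) (β g : ℝ) (hn : 2 ≤ n) (hβ : 0 < β) (hg0 : 0 ≤ g) (hg1 : g ≤ 1) :
    symDenom n β g ≤ (n : ℝ) * Real.exp β := by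
  have hnR : (2 : ℝ) ≤ (n : ℝ) := by exact_mod_cast hn
  have ha := Real.exp_pos β
  have hb := Real.exp_pos (β * g)
  have hba : Real.exp (β * g) ≤ Real.exp β := Real.exp_le_exp.mpr (by nlinarith)
  unfold symDenom
  rw [expand_aux]
  have hbg : Real.exp (β * g) * g ≤ Real.exp β := by nlinarith
  have t1 : 2 * ((n:ℝ) - 1) * (Real.exp β * Real.exp (β * g)) * g
      ≤ 2 * ((n:ℝ) - 1) * (Real.exp β * Real.exp β) := by
    have := mul_le_mul_of_nonneg_left hbg (by nlinarith : (0:ℝ) ≤ 2 * ((n:ℝ) - 1) * Real.exp β)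
    nlinarith [this]
  have t2 : (Real.exp (β * g)) ^ 2 * (1 + ((n:ℝ) - 2) * g) ≤ (Real.exp β) ^ 2 * ((n:ℝ) - 1) := by
    have hsq : (Real.exp (β * g)) ^ 2 ≤ (Real.exp β) ^ 2 := by nlinarith
    have hcc : 1 + ((n:ℝ) - 2) * g ≤ (n:ℝ) - 1 := by nlinarith
    have hcc0 : 0 ≤ 1 + ((n:ℝ) - 2) * g := by nlinarith
    nlinarith [sq_nonneg (Real.exp β)]
  have t2' : ((n:ℝ) - 1) * ((Real.exp (β * g)) ^ 2 * (1 + ((n:ℝ) - 2) * g))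
      ≤ ((n:ℝ) - 1) * ((Real.exp β) ^ 2 * ((n:ℝ) - 1)) :=
    mul_le_mul_of_nonneg_left t2 (by linarith)
  calc Real.sqrt _ ≤ Real.sqrt (((n : ℝ) * Real.exp β) ^ 2) := by
        apply Real.sqrt_le_sqrt
        nlinarith [t1, t2']
    _ = (n : ℝ) * Real.exp β := Real.sqrt_sq (by positivity)

lemma num_le_symDenom (n : ℕ) (β g : ℝ) (hn : 2 ≤ n) (hg0 : 0 ≤ g) (hg1 : g ≤ 1) :
    ((n : ℝ) - 1) * Real.exp (β * g) * g + Real.exp β ≤ symDenom n β g := by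
  have hnR : (2 : ℝ) ≤ (n : ℝ) := by exact_mod_cast hn
  have ha := Real.exp_pos β
  have hb := Real.exp_pos (β * g)
  have h1 : 0 ≤ 2 * ((n:ℝ) - 1) * (Real.exp β * Real.exp (β * g)) * g :=
    mul_nonneg (mul_nonneg (by linarith : (0:ℝ) ≤ 2 * ((n:ℝ) - 1)) (mul_pos ha hb).le) hg0
  have hg2 : 0 ≤ ((n:ℝ) - 2) * g := mul_nonneg (by linarith) hg0
  have h2 : 0 ≤ ((n:ℝ) - 1) * (Real.exp (β * g)) ^ 2 * (1 + ((n:ℝ) - 2) * g) :=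
    mul_nonneg (mul_nonneg (by linarith) (sq_nonneg _)) (by linarith)
  have hNn : (0:ℝ) ≤ ((n : ℝ) - 1) * Real.exp (β * g) * g + Real.exp β := by
    nlinarith [mul_nonneg (mul_nonneg (by linarith : (0:ℝ) ≤ (n:ℝ)-1) hb.le) hg0]
  have key : 0 ≤ ((n:ℝ) - 1) * (Real.exp (β * g)) ^ 2 * ((1 - g) * (1 + ((n:ℝ) - 1) * g)) :=
    mul_nonneg (mul_nonneg (by linarith) (sq_nonneg _))
      (mul_nonneg (by linarith) (by nlinarith))
  unfold symDenom
  rw [expand_aux]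
  rw [Real.le_sqrt hNn (by nlinarith [sq_nonneg (Real.exp β)])]
  nlinarith [key]

lemma symDenom_one (n : ℕ) (β : ℝ) : symDenom n β 1 = (n : ℝ) * Real.exp β := by
  unfold symDenom
  rw [show Real.exp (2*β) + 2*((n:ℝ)-1)*Real.exp (β*(1+1))*1 + ((n:ℝ)-1)*Real.exp (2*β*1)*(1+((n:ℝ)-2)*1)
      = ((n : ℝ) * Real.exp β) ^ 2 by
    rw [show 2*β*1 = β + β by ring, show β*(1+1) = β + β by ring, show 2*β = β + β by ring,
      Real.exp_add]; ring]
  exact Real.sqrt_sq (by positivity)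

lemma mono_aux {f f' : ℝ → ℝ} {a b : ℝ} (hab : a ≤ b)
    (hd : ∀ t ∈ Set.Icc a b, HasDerivAt f (f' t) t)
    (h0 : ∀ t ∈ Set.Icc a b, 0 ≤ f' t) : f a ≤ f b := by
  have hmono := monotoneOn_of_hasDerivWithinAt_nonneg (convex_Icc a b)
    (fun t ht => (hd t ht).continuousAt.continuousWithinAt)
    (fun t ht => (hd t (Set.Ioo_subset_Icc_self (by rwa [interior_Icc] at ht))).hasDerivWithinAt)
    (fun t ht => h0 t (Set.Ioo_subset_Icc_self (by rwa [interior_Icc] at ht)))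
  exact hmono (Set.left_mem_Icc.mpr hab) (Set.right_mem_Icc.mpr hab) hab

lemma symDenom_nonneg (n : ℕ) (β g : ℝ) : 0 ≤ symDenom n β g := Real.sqrt_nonneg _

set_option maxHeartbeats 1000000 in
/-- Peri-LN symmetric system: asymptotics of cosine similarity and
magnitude. -/
theorem periLN_symmetric_system_asymptotics (n : ℕ) (hn : 2 ≤ n) (β : ℝ) (hβ : 0 < β)
    (r₀ : ℝ) (hr₀ : 0 < r₀) (γ r : ℝ → ℝ)
    (hrpos : ∀ t, 0 ≤ t → 0 < r t)
    (hγ0 : γ 0 = 0) (hr0 : r 0 = r₀)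
    (hrdyn : ∀ t, 0 ≤ t → HasDerivAt r
      (((n - 1) * Real.exp (β * γ t) * γ t + Real.exp β) / symDenom n β (γ t)) t)
    (hγdyn : ∀ t, 0 ≤ t → HasDerivAt γ
      (2 * Real.exp (β * γ t) * (1 - γ t) * ((n - 1) * γ t + 1) /
        (r t * symDenom n β (γ t))) t) :
    (∀ t, 0 ≤ t → 0 ≤ γ t ∧ γ t < 1) ∧
    Tendsto γ atTop (nhds 1) ∧
    Tendsto (fun t => r t / t) atTop (nhds 1) := by
  have hnR : (2 : ℝ) ≤ (n : ℝ) := by exact_mod_cast hn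
  -- ### Step 1 : γ stays nonnegative
  have hγnn : ∀ t, 0 ≤ t → 0 ≤ γ t := by
    intro t₁ ht₁
    by_contra hneg
    push_neg at hneg
    have ht₁pos : 0 < t₁ := by
      rcases ht₁.lt_or_eq with h | h
      · exact h
      · exfalso; rw [← h, hγ0] at hneg; exact lt_irrefl 0 hneg
    set S : Set ℝ := {t | t ∈ Set.Icc 0 t₁ ∧ 0 ≤ γ t} with hSdef
    have hS0 : (0:ℝ) ∈ S := ⟨⟨le_rfl, ht₁⟩, le_of_eq hγ0.symm⟩
    have hSne : S.Nonempty := ⟨0, hS0⟩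
    have hSbdd : BddAbove S := ⟨t₁, fun x hx => hx.1.2⟩
    set s := sSup S with hsdef
    have hs0 : 0 ≤ s := le_csSup hSbdd hS0
    have hst₁ : s ≤ t₁ := csSup_le hSne fun x hx => hx.1.2
    have hcont : ContinuousAt γ s := (hγdyn s hs0).continuousAt
    have hγs0 : 0 ≤ γ s := by
      by_contra h
      push_neg at h
      rcases Metric.mem_nhds_iff.mp (hcont (Iio_mem_nhds h)) with ⟨ε, hε, hball⟩
      rcases exists_lt_of_lt_csSup hSne (by linarith : s - ε < s) with ⟨x, hxS, hxgt⟩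
      have hxle : x ≤ s := le_csSup hSbdd hxS
      have hx : γ x < 0 := hball (by
        rw [Metric.mem_ball, Real.dist_eq, abs_lt]; constructor <;> linarith)
      exact absurd hxS.2 (not_le.mpr hx)
    have hslt : s < t₁ := by
      rcases hst₁.lt_or_eq with h | h
      · exact h
      · exfalso; rw [h] at hγs0; linarith
    have hγs : γ s = 0 := by
      rcases hγs0.lt_or_eq with h | h
      · exfalso
        rcases Metric.mem_nhds_iff.mp (hcont (Ioi_mem_nhds h)) with ⟨ε, hε, hball⟩
        set x := min (s + ε/2) ((s + t₁)/2) with hxdef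
        have hx1 : s < x := lt_min (by linarith) (by linarith)
        have hx2 : x ≤ t₁ := le_trans (min_le_right _ _) (by linarith)
        have hx3 : x ≤ s + ε/2 := min_le_left _ _
        have hγx : 0 < γ x := hball (by
          rw [Metric.mem_ball, Real.dist_eq, abs_lt]; constructor <;> linarith)
        have hxS : x ∈ S := ⟨⟨le_trans hs0 hx1.le, hx2⟩, hγx.le⟩
        exact absurd (le_csSup hSbdd hxS) (not_le.mpr hx1)
      · exact h.symm
    have hd := hγdyn s hs0
    rw [hγs] at hd
    have hDpos := symDenom_pos n β 0 hn le_rfl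
    have hval : 0 < 2 * Real.exp (β * 0) * (1 - 0) * (((n:ℝ) - 1) * 0 + 1) /
        (r s * symDenom n β 0) := by
      apply div_pos
      · have := Real.exp_pos (β * 0); nlinarith
      · exact mul_pos (hrpos s hs0) hDpos
    rw [hasDerivAt_iff_tendsto_slope] at hd
    have hIoi_le : 𝓝[>] s ≤ 𝓝[≠] s := nhdsWithin_mono s fun x hx => ne_of_gt hx
    have hev1 : ∀ᶠ x in 𝓝[>] s, 0 < slope γ s x := hIoi_le (hd (Ioi_mem_nhds hval))
    have hev2 : ∀ᶠ x in 𝓝[>] s, x < t₁ := nhdsWithin_le_nhds (Iio_mem_nhds hslt)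
    have hself : ∀ᶠ x in 𝓝[>] s, s < x := self_mem_nhdsWithin
    obtain ⟨x, ⟨hslope, hxlt⟩, hxgt⟩ := ((hev1.and hev2).and hself).exists
    have hxs : 0 < x - s := sub_pos.mpr hxgt
    have hsl : 0 < (γ x - γ s) / (x - s) := by rwa [slope_def_field] at hslope
    have hγx : 0 < γ x := by
      have h := mul_pos hsl hxs
      rw [div_mul_cancel₀ _ (ne_of_gt hxs)] at h
      rw [hγs, sub_zero] at h
      exact h
    have hxS : x ∈ S := ⟨⟨le_trans hs0 hxgt.le, hxlt.le⟩, hγx.le⟩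
    exact absurd (le_csSup hSbdd hxS) (not_le.mpr hxgt)
  -- ### Step 2 : r is nondecreasing, bounded below by r₀
  have hrval_nonneg : ∀ u, 0 ≤ u →
      0 ≤ (((n:ℝ) - 1) * Real.exp (β * γ u) * γ u + Real.exp β) / symDenom n β (γ u) := by
    intro u hu
    apply div_nonneg _ (symDenom_nonneg n β _)
    have := hγnn u hu
    have := Real.exp_pos (β * γ u)
    have := Real.exp_pos β
    nlinarith [mul_nonneg (mul_nonneg (by linarith : (0:ℝ) ≤ (n:ℝ) - 1)
      (Real.exp_pos (β * γ u)).le) (hγnn u hu)]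
  have hrmono : ∀ a b, 0 ≤ a → a ≤ b → r a ≤ r b := by
    intro a b ha hab
    exact mono_aux hab (fun u hu => hrdyn u (ha.trans hu.1))
      (fun u hu => hrval_nonneg u (ha.trans hu.1))
  have hrlb : ∀ t, 0 ≤ t → r₀ ≤ r t := by
    intro t ht
    have := hrmono 0 t le_rfl ht
    rwa [hr0] at this
  -- ### Step 3 : γ stays below 1 (Gronwall barrier)
  have hγle1 : ∀ t, 0 ≤ t → γ t < 1 := by
    intro t₁ ht₁
    by_contra hge
    push_neg at hge
    set S : Set ℝ := {t | t ∈ Set.Icc 0 t₁ ∧ 1 ≤ γ t} with hSdef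
    have hSne : S.Nonempty := ⟨t₁, ⟨⟨ht₁, le_rfl⟩, hge⟩⟩
    have hSbdd : BddBelow S := ⟨0, fun x hx => hx.1.1⟩
    set s := sInf S with hsdef
    have hs0 : 0 ≤ s := le_csInf hSne fun x hx => hx.1.1
    have hst₁ : s ≤ t₁ := csInf_le hSbdd ⟨⟨ht₁, le_rfl⟩, hge⟩
    have hcont : ContinuousAt γ s := (hγdyn s hs0).continuousAt
    have hγs1 : 1 ≤ γ s := by
      by_contra h
      push_neg at h
      rcases Metric.mem_nhds_iff.mp (hcont (Iio_mem_nhds h)) with ⟨ε, hε, hball⟩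
      rcases exists_lt_of_csInf_lt hSne (by linarith : s < s + ε) with ⟨x, hxS, hxlt⟩
      have hxge : s ≤ x := csInf_le hSbdd hxS
      have : γ x < 1 := hball (by
        rw [Metric.mem_ball, Real.dist_eq, abs_lt]; constructor <;> linarith)
      exact absurd hxS.2 (not_le.mpr this)
    have hγs : γ s = 1 := by
      rcases hγs1.lt_or_eq with h | h
      · exfalso
        have hspos : 0 < s := by
          rcases hs0.lt_or_eq with h' | h'
          · exact h'
          · exfalso; rw [← h', hγ0] at h; linarith
        rcases Metric.mem_nhds_iff.mp (hcont (Ioi_mem_nhds h)) with ⟨ε, hε, hball⟩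
        set x := max (s - ε/2) (s/2) with hxdef
        have hx1 : x < s := max_lt (by linarith) (by linarith)
        have hx2 : 0 ≤ x := le_trans (by linarith) (le_max_right _ _)
        have hx3 : s - ε/2 ≤ x := le_max_left _ _
        have hγx : 1 < γ x := hball (by
          rw [Metric.mem_ball, Real.dist_eq, abs_lt]; constructor <;> linarith)
        have hxS : x ∈ S := ⟨⟨hx2, le_trans hx1.le hst₁⟩, hγx.le⟩
        exact absurd (csInf_le hSbdd hxS) (not_le.mpr hx1)
      · exact h.symm
    have hbefore : ∀ u, 0 ≤ u → u < s → γ u < 1 := by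
      intro u hu0 hus
      by_contra h
      push_neg at h
      have : u ∈ S := ⟨⟨hu0, le_trans hus.le hst₁⟩, h⟩
      exact absurd (csInf_le hSbdd this) (not_le.mpr hus)
    have hγmem : ∀ u, u ∈ Set.Icc (0:ℝ) s → 0 ≤ γ u ∧ γ u ≤ 1 := by
      intro u hu
      refine ⟨hγnn u hu.1, ?_⟩
      rcases hu.2.lt_or_eq with h | h
      · exact (hbefore u hu.1 h).le
      · rw [h, hγs]
    set K := 2 * (n:ℝ) / r₀ with hKdef
    have hw := mono_aux (f := fun u => (1 - γ u) * Real.exp (K * u))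
      (f' := fun u => (-(2 * Real.exp (β * γ u) * (1 - γ u) * (((n:ℝ) - 1) * γ u + 1) /
          (r u * symDenom n β (γ u)))) * Real.exp (K * u) +
          (1 - γ u) * (Real.exp (K * u) * K)) hs0
      (fun u hu => by
        have h1 : HasDerivAt (fun v => 1 - γ v)
            (-(2 * Real.exp (β * γ u) * (1 - γ u) * (((n:ℝ) - 1) * γ u + 1) /
              (r u * symDenom n β (γ u)))) u := (hγdyn u hu.1).const_sub 1
        have h2 : HasDerivAt (fun v => Real.exp (K * v)) (Real.exp (K * u) * K) u := by
          have h3 := ((hasDerivAt_id u).const_mul K).exp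
          simpa using h3
        exact h1.mul h2)
      (fun u hu => by
        obtain ⟨hg0, hg1⟩ := hγmem u hu
        have hu0 := hu.1
        have hrl : r₀ ≤ r u := hrlb u hu0
        have hDl : Real.exp β ≤ symDenom n β (γ u) := exp_le_symDenom n β (γ u) hn hg0
        have hrpos' : 0 < r u := hrpos u hu0
        have hea := Real.exp_pos β
        have heb := Real.exp_pos (β * γ u)
        have hnum_le : 2 * Real.exp (β * γ u) * (1 - γ u) * (((n:ℝ) - 1) * γ u + 1) ≤
            2 * Real.exp β * (1 - γ u) * (n:ℝ) := by
          have hbb : Real.exp (β * γ u) ≤ Real.exp β := Real.exp_le_exp.mpr (by nlinarith)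
          have hcc : ((n:ℝ) - 1) * γ u + 1 ≤ (n:ℝ) := by nlinarith
          have hcc0 : 0 ≤ ((n:ℝ) - 1) * γ u + 1 := by nlinarith
          nlinarith [mul_nonneg (sub_nonneg.mpr hg1) heb.le,
            mul_nonneg (mul_nonneg (sub_nonneg.mpr hg1) heb.le) hcc0,
            mul_nonneg (sub_nonneg.mpr hg1) hea.le]
        have hden_le : r₀ * Real.exp β ≤ r u * symDenom n β (γ u) :=
          mul_le_mul hrl hDl hea.le (by linarith)
        have hγ'le : 2 * Real.exp (β * γ u) * (1 - γ u) * (((n:ℝ) - 1) * γ u + 1) /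
            (r u * symDenom n β (γ u)) ≤
            2 * Real.exp β * (1 - γ u) * (n:ℝ) / (r₀ * Real.exp β) :=
          div_le_div₀ (by nlinarith [mul_nonneg (sub_nonneg.mpr hg1) hea.le])
            hnum_le (mul_pos hr₀ hea) hden_le
        have heq : 2 * Real.exp β * (1 - γ u) * (n:ℝ) / (r₀ * Real.exp β) = K * (1 - γ u) := by
          rw [hKdef]; field_simp
        rw [heq] at hγ'le
        have hexp := Real.exp_pos (K * u)
        nlinarith [mul_nonneg (sub_nonneg.mpr hγ'le) hexp.le])
    have hw0 : (1 - γ 0) * Real.exp (K * 0) = 1 := by simp [hγ0]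
    have hws : (1 - γ s) * Real.exp (K * s) = 0 := by simp [hγs]
    rw [hw0, hws] at hw
    linarith
  -- ### Step 4 : γ is nondecreasing ; r t ≤ r₀ + t
  have hγval_nonneg : ∀ u, 0 ≤ u →
      0 ≤ 2 * Real.exp (β * γ u) * (1 - γ u) * (((n:ℝ) - 1) * γ u + 1) /
        (r u * symDenom n β (γ u)) := by
    intro u hu
    have hg0 := hγnn u hu
    have hg1 := (hγle1 u hu).le
    apply div_nonneg
    · have := Real.exp_pos (β * γ u)
      nlinarith [mul_nonneg (mul_nonneg (by nlinarith : (0:ℝ) ≤ 2 * Real.exp (β * γ u))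
        (sub_nonneg.mpr hg1)) (by nlinarith [mul_nonneg (by linarith : (0:ℝ) ≤ (n:ℝ) - 1) hg0] :
        (0:ℝ) ≤ ((n:ℝ) - 1) * γ u + 1)]
    · exact mul_nonneg (hrpos u hu).le (symDenom_nonneg n β _)
  have hγmono : ∀ a b, 0 ≤ a → a ≤ b → γ a ≤ γ b := by
    intro a b ha hab
    exact mono_aux hab (fun u hu => hγdyn u (ha.trans hu.1))
      (fun u hu => hγval_nonneg u (ha.trans hu.1))
  have hrub : ∀ t, 0 ≤ t → r t ≤ r₀ + t := by
    intro t ht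
    have hmm := mono_aux (f := fun u => r₀ + u - r u)
      (f' := fun u => 1 - (((n:ℝ) - 1) * Real.exp (β * γ u) * γ u + Real.exp β) /
        symDenom n β (γ u)) ht
      (fun u hu => by
        have h1 : HasDerivAt (fun v => r₀ + v) 1 u := by
          simpa using (hasDerivAt_id u).const_add r₀
        exact h1.sub (hrdyn u hu.1))
      (fun u hu => by
        have hg0 := hγnn u hu.1
        have hg1 := (hγle1 u hu.1).le
        have hDpos := symDenom_pos n β (γ u) hn hg0
        have hle := num_le_symDenom n β (γ u) hn hg0 hg1
        have := (div_le_one hDpos).mpr hle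
        linarith)
    rw [hr0] at hmm
    linarith
  -- ### Step 5 : γ tends to a limit L and L = 1
  have hbddA : BddAbove (Set.range fun t => γ (max t 0)) := by
    refine ⟨1, ?_⟩
    rintro y ⟨t, rfl⟩
    exact (hγle1 (max t 0) (le_max_right t 0)).le
  have hmonoA : Monotone fun t => γ (max t 0) := fun a b hab =>
    hγmono (max a 0) (max b 0) (le_max_right a 0) (max_le_max hab le_rfl)
  have htdA := tendsto_atTop_ciSup hmonoA hbddA
  set L := ⨆ t, γ (max t 0) with hLdef
  have hγL : Tendsto γ atTop (𝓝 L) := by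
    apply htdA.congr'
    filter_upwards [eventually_ge_atTop (0:ℝ)] with t ht
    rw [max_eq_left ht]
  have hγleL : ∀ t, 0 ≤ t → γ t ≤ L := by
    intro t ht
    have := le_ciSup hbddA t
    rwa [max_eq_left ht] at this
  have hL_le_one : L ≤ 1 := ciSup_le fun t => (hγle1 _ (le_max_right t 0)).le
  have hL1 : L = 1 := by
    by_contra hne
    have hLlt : L < 1 := lt_of_le_of_ne hL_le_one hne
    have hL0 : 0 ≤ L := le_trans (hγnn 0 le_rfl) (hγleL 0 le_rfl)
    set c := 2 * (1 - L) / ((n:ℝ) * Real.exp β) with hcdef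
    have hcpos : 0 < c := div_pos (by linarith) (by positivity)
    set T := r₀ * Real.exp (2 / c) with hTdef
    have hT0 : 0 ≤ T := by positivity
    have key := mono_aux (f := fun u => γ u - c * Real.log (r₀ + u))
      (f' := fun u => 2 * Real.exp (β * γ u) * (1 - γ u) * (((n:ℝ) - 1) * γ u + 1) /
        (r u * symDenom n β (γ u)) - c * (1 / (r₀ + u))) hT0
      (fun u hu => by
        have h1 := hγdyn u hu.1
        have h3 : HasDerivAt (fun v => r₀ + v) 1 u := by
          simpa using (hasDerivAt_id u).const_add r₀
        have h2 : HasDerivAt (fun v => Real.log (r₀ + v)) (1 / (r₀ + u)) u := by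
          have h4 := h3.log (by intro hc0; nlinarith [hu.1] : r₀ + u ≠ 0)
          simpa using h4
        exact h1.sub (h2.const_mul c))
      (fun u hu => by
        have hu0 := hu.1
        have hg0 := hγnn u hu0
        have hg1 := (hγle1 u hu0).le
        have hgL := hγleL u hu0
        have hDl := exp_le_symDenom n β (γ u) hn hg0
        have hDu := symDenom_le n β (γ u) hn hβ hg0 hg1
        have hrl := hrpos u hu0
        have hru := hrub u hu0
        have hea := Real.exp_pos β
        have hnuml : 2 * (1 - L) ≤
            2 * Real.exp (β * γ u) * (1 - γ u) * (((n:ℝ) - 1) * γ u + 1) := by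
          have he1 : 1 ≤ Real.exp (β * γ u) := Real.one_le_exp (by positivity)
          have hf1 : 1 ≤ ((n:ℝ) - 1) * γ u + 1 := by
            nlinarith [mul_nonneg (by linarith : (0:ℝ) ≤ (n:ℝ) - 1) hg0]
          have hf2 : 1 - L ≤ 1 - γ u := by linarith
          nlinarith [mul_nonneg (sub_nonneg.mpr hg1) (sub_nonneg.mpr he1),
            mul_le_mul hf2 hf1 (by linarith) (by linarith),
            mul_nonneg (mul_nonneg (sub_nonneg.mpr hg1) (Real.exp_pos (β * γ u)).le)
              (sub_nonneg.mpr hf1)]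
        have hdenu : r u * symDenom n β (γ u) ≤ (r₀ + u) * ((n:ℝ) * Real.exp β) :=
          mul_le_mul hru hDu (symDenom_nonneg n β _) (by linarith)
        have hdenp : 0 < r u * symDenom n β (γ u) :=
          mul_pos hrl (symDenom_pos n β (γ u) hn hg0)
        have hdiv : 2 * (1 - L) / ((r₀ + u) * ((n:ℝ) * Real.exp β)) ≤
            2 * Real.exp (β * γ u) * (1 - γ u) * (((n:ℝ) - 1) * γ u + 1) /
              (r u * symDenom n β (γ u)) :=
          div_le_div₀ (le_trans (by linarith) hnuml) hnuml hdenp hdenu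
        have heq : c * (1 / (r₀ + u)) =
            2 * (1 - L) / ((r₀ + u) * ((n:ℝ) * Real.exp β)) := by
          rw [mul_one_div, hcdef, div_div, mul_comm ((n:ℝ) * Real.exp β) (r₀ + u)]
        have hfin : c * (1 / (r₀ + u)) ≤
            2 * Real.exp (β * γ u) * (1 - γ u) * (((n:ℝ) - 1) * γ u + 1) /
              (r u * symDenom n β (γ u)) := by
          rw [heq]; exact hdiv
        exact sub_nonneg.mpr hfin)
    have hlog : 2 / c ≤ Real.log (r₀ + T) - Real.log r₀ := by
      have h1 : (0:ℝ) < r₀ + T := by positivity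
      have h2 : Real.exp (2 / c) ≤ (r₀ + T) / r₀ := by
        rw [hTdef]
        rw [le_div_iff₀ hr₀]
        nlinarith [Real.exp_pos (2 / c)]
      calc 2 / c = Real.log (Real.exp (2 / c)) := (Real.log_exp _).symm
        _ ≤ Real.log ((r₀ + T) / r₀) := by
            rw [Real.log_le_log_iff (Real.exp_pos _) (by positivity)]
            exact h2
        _ = Real.log (r₀ + T) - Real.log r₀ := Real.log_div (by positivity) (by positivity)
    have hc2 : c * (2 / c) = 2 := by field_simp
    have hkey2 : c * (2 / c) ≤ c * (Real.log (r₀ + T) - Real.log r₀) :=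
      mul_le_mul_of_nonneg_left hlog hcpos.le
    rw [hc2] at hkey2
    rw [hγ0, add_zero] at key
    have hγT : 2 ≤ γ T := by nlinarith [key, hkey2]
    linarith [hγle1 T hT0]
  have hγtends : Tendsto γ atTop (𝓝 1) := hL1 ▸ hγL
  -- ### Step 6 : r t / t → 1
  have hnpos : (0:ℝ) < (n:ℝ) := by linarith
  have hFcont : ContinuousAt (fun g => (((n:ℝ) - 1) * Real.exp (β * g) * g + Real.exp β) /
      symDenom n β g) 1 := by
    apply ContinuousAt.div
    · exact Continuous.continuousAt (by continuity)
    · have hco : Continuous fun g => symDenom n β g := by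
        unfold symDenom
        exact Real.continuous_sqrt.comp (by continuity)
      exact hco.continuousAt
    · rw [symDenom_one]
      exact ne_of_gt (mul_pos hnpos (Real.exp_pos β))
  have hF1 : (((n:ℝ) - 1) * Real.exp (β * 1) * 1 + Real.exp β) / symDenom n β 1 = 1 := by
    rw [symDenom_one, mul_one, div_eq_one_iff_eq (ne_of_gt (mul_pos hnpos (Real.exp_pos β)))]
    ring
  have hFtend : Tendsto (fun t => (((n:ℝ) - 1) * Real.exp (β * γ t) * γ t + Real.exp β) /
      symDenom n β (γ t)) atTop (𝓝 1) := by
    have h := hFcont.tendsto.comp hγtends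
    rw [hF1] at h
    exact h
  have main : ∀ ε : ℝ, 0 < ε → ∀ᶠ t in atTop, |r t / t - 1| ≤ ε := by
    intro ε hε
    have hev : ∀ᶠ t in atTop, 1 - ε / 2 ≤ (((n:ℝ) - 1) * Real.exp (β * γ t) * γ t +
        Real.exp β) / symDenom n β (γ t) :=
      hFtend.eventually (eventually_ge_nhds (by linarith : 1 - ε / 2 < 1))
    obtain ⟨T₀, hT₀⟩ := eventually_atTop.mp (hev.and (eventually_ge_atTop (0:ℝ)))
    set T := max T₀ 0 with hTdef
    have hT0 : 0 ≤ T := le_max_right _ _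
    have hTprop : ∀ t, T ≤ t → 1 - ε / 2 ≤ (((n:ℝ) - 1) * Real.exp (β * γ t) * γ t +
        Real.exp β) / symDenom n β (γ t) :=
      fun t ht => (hT₀ t (le_trans (le_max_left _ _) ht)).1
    have hgrow : ∀ t, T ≤ t → r T + (1 - ε / 2) * (t - T) ≤ r t := by
      intro t ht
      have hmm := mono_aux (f := fun u => r u - (1 - ε / 2) * u)
        (f' := fun u => (((n:ℝ) - 1) * Real.exp (β * γ u) * γ u + Real.exp β) /
          symDenom n β (γ u) - (1 - ε / 2)) ht
        (fun u hu => by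
          have h1 : HasDerivAt (fun v => (1 - ε / 2) * v) (1 - ε / 2) u := by
            simpa using (hasDerivAt_id u).const_mul (1 - ε / 2)
          exact (hrdyn u (le_trans hT0 hu.1)).sub h1)
        (fun u hu => by
          have := hTprop u hu.1
          linarith)
      nlinarith [hmm]
    obtain ⟨A, hA⟩ : ∃ A : ℝ, A = r T - (1 - ε / 2) * T := ⟨_, rfl⟩
    filter_upwards [eventually_ge_atTop (max T (max 1 (max (2 * |A| / ε) (r₀ / ε))))] with t ht
    have ht1 : T ≤ t := le_trans (le_max_left _ _) ht
    have ht2 : 1 ≤ t := le_trans (le_trans (le_max_left _ _) (le_max_right _ _)) ht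
    have ht3 : 2 * |A| / ε ≤ t :=
      le_trans (le_trans (le_trans (le_max_left _ _) (le_max_right _ _)) (le_max_right _ _)) ht
    have ht4 : r₀ / ε ≤ t :=
      le_trans (le_trans (le_trans (le_max_right _ _) (le_max_right _ _)) (le_max_right _ _)) ht
    have htpos : 0 < t := by linarith
    have hup : r t / t - 1 ≤ ε := by
      have h1 : r t ≤ r₀ + t := hrub t (by linarith)
      have h2 : r₀ ≤ t * ε := (div_le_iff₀ hε).mp ht4
      have h3 : r t ≤ (ε + 1) * t := by nlinarith
      have := (div_le_iff₀ htpos).mpr h3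
      linarith
    have hlow : -ε ≤ r t / t - 1 := by
      have h4 : 2 * |A| ≤ t * ε := (div_le_iff₀ hε).mp ht3
      have h5 : -A ≤ |A| := neg_le_abs A
      have h6 : (1 - ε) * t ≤ r t := by nlinarith [hgrow t ht1, hA, h4, h5]
      have := (le_div_iff₀ htpos).mpr h6
      linarith
    rw [abs_le]
    exact ⟨hlow, hup⟩
  refine ⟨fun t ht => ⟨hγnn t ht, hγle1 t ht⟩, hγtends, ?_⟩
  rw [Metric.tendsto_nhds]
  intro ε hε
  filter_upwards [main (ε / 2) (by linarith)] with t ht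
  rw [Real.dist_eq]
  linarith
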